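/- Let A be an NFA over the finite alphabet U = {u₁, …, u_p} with state set Q, and let A^c be the counting automaton built from A: its state set is Q × {0, 1, …, p}, its start states are start(A) × {0}, its accepting states are accept(A) × {p}, and (q′, k) ∈ step^c((q, i), u_j) if and only if q′ ∈ step(q, u_j) and either (j ≤ i and k = i) or (j = i + 1 and k = i + 1). Then a word w over U is accepted by A^c if and only if: w is accepted by A, every symbol u₁, …, u_p occurs in w, and for every j, every symbol occurring in w strictly before the first occurrence of u_j belongs to {u₁, …, u_{j−1}}. -/

import Mathlib

/-- The counting automaton built from an NFA over the ordered alphabet `Fin p`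
(the letter `j : Fin p` represents the symbol `u_{j+1}`). Its states are pairs of a
state of `M` and a counter in `{0, …, p}`; it counts the number of distinct symbols
seen so far and rejects words violating the order. -/
def countNFA {σ : Type*} {p : ℕ} (M : NFA (Fin p) σ) : NFA (Fin p) (σ × Fin (p + 1)) where
  step := fun qi j =>
    {q' | q'.1 ∈ M.step qi.1 j ∧
      (((j : ℕ) + 1 ≤ (qi.2 : ℕ) ∧ q'.2 = qi.2) ∨
        ((j : ℕ) + 1 = (qi.2 : ℕ) + 1 ∧ (q'.2 : ℕ) = (qi.2 : ℕ) + 1))}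
  start := {qi | qi.1 ∈ M.start ∧ qi.2 = 0}
  accept := {qi | qi.1 ∈ M.accept ∧ (qi.2 : ℕ) = p}

/-- The deterministic counter evolution. -/
def cf {p : ℕ} (i : ℕ) : List (Fin p) → Option ℕ
  | [] => some i
  | j :: w => if (j : ℕ) < i then cf i w else if (j : ℕ) = i then cf (i + 1) w else none

theorem evalFrom_empty {α σ : Type*} (N : NFA α σ) (w : List α) : N.evalFrom ∅ w = ∅ := by
  induction w with
  | nil => rfl
  | cons a w ih =>
    show N.evalFrom (N.stepSet ∅ a) w = ∅
    rw [NFA.stepSet_empty]; exact ih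

theorem eval_count {σ : Type*} {p : ℕ} (M : NFA (Fin p) σ) (w : List (Fin p)) :
    ∀ (S : Set σ) (i : Fin (p + 1)) (q' : σ) (k : Fin (p + 1)),
      (q', k) ∈ (countNFA M).evalFrom {qi | qi.1 ∈ S ∧ qi.2 = i} w ↔
        q' ∈ M.evalFrom S w ∧ cf (i : ℕ) w = some (k : ℕ) := by
  induction w with
  | nil =>
    intro S i q' k
    simp only [NFA.evalFrom_nil, Set.mem_setOf_eq, cf, Option.some.injEq]
    constructor
    · rintro ⟨h1, rfl⟩; exact ⟨h1, rfl⟩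
    · rintro ⟨h1, h2⟩; exact ⟨h1, (Fin.val_inj.mp h2.symm)⟩
  | cons j w ih =>
    intro S i q' k
    show (q', k) ∈ (countNFA M).evalFrom ((countNFA M).stepSet _ j) w ↔ _
    rcases lt_trichotomy (j : ℕ) (i : ℕ) with hlt | heq | hgt
    · have hset : (countNFA M).stepSet {qi | qi.1 ∈ S ∧ qi.2 = i} j
          = {qi | qi.1 ∈ M.stepSet S j ∧ qi.2 = i} := by
        ext ⟨a, c⟩
        simp only [NFA.mem_stepSet, Set.mem_setOf_eq, countNFA]
        constructor
        · rintro ⟨⟨q, c'⟩, ⟨hq, rfl⟩, hst, hcase⟩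
          rcases hcase with ⟨_, rfl⟩ | ⟨hj, _⟩
          · exact ⟨⟨q, hq, hst⟩, rfl⟩
          · omega
        · rintro ⟨⟨q, hq, hst⟩, hc⟩
          exact ⟨⟨q, i⟩, ⟨hq, rfl⟩, hst, Or.inl ⟨show (j:ℕ)+1 ≤ (i:ℕ) by omega, hc⟩⟩
      rw [hset, ih]
      have : cf (i : ℕ) (j :: w) = cf (i : ℕ) w := by simp [cf, hlt]
      rw [this]; rfl
    · have hip : (i : ℕ) < p := by have := j.isLt; omega
      set i' : Fin (p + 1) := ⟨(i : ℕ) + 1, by omega⟩ with hi'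
      have hset : (countNFA M).stepSet {qi | qi.1 ∈ S ∧ qi.2 = i} j
          = {qi | qi.1 ∈ M.stepSet S j ∧ qi.2 = i'} := by
        ext ⟨a, c⟩
        simp only [NFA.mem_stepSet, Set.mem_setOf_eq, countNFA]
        constructor
        · rintro ⟨⟨q, c'⟩, ⟨hq, rfl⟩, hst, hcase⟩
          rcases hcase with ⟨h1, _⟩ | ⟨_, h2⟩
          · omega
          · exact ⟨⟨q, hq, hst⟩, Fin.val_inj.mp (by simp [hi', h2])⟩
        · rintro ⟨⟨q, hq, hst⟩, hc⟩
          refine ⟨⟨q, i⟩, ⟨hq, rfl⟩, hst, Or.inr ⟨show (j:ℕ)+1 = (i:ℕ)+1 by omega, ?_⟩⟩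
          rw [hc]
      rw [hset, ih]
      have : cf (i : ℕ) (j :: w) = cf ((i : ℕ) + 1) w := by simp [cf, heq]
      rw [this]
      exact Iff.rfl
    · have hset : (countNFA M).stepSet {qi | qi.1 ∈ S ∧ qi.2 = i} j = ∅ := by
        ext ⟨a, c⟩
        simp only [NFA.mem_stepSet, Set.mem_setOf_eq, countNFA, Set.mem_empty_iff_false,
          iff_false]
        rintro ⟨⟨q, c'⟩, ⟨hq, rfl⟩, _, hcase⟩
        rcases hcase with ⟨h1, _⟩ | ⟨h2, _⟩ <;> omega
      rw [hset, evalFrom_empty]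
      have : cf (i : ℕ) (j :: w) = none := by
        simp only [cf, if_neg (by omega : ¬ (j : ℕ) < (i : ℕ)),
          if_neg (by omega : ¬ (j : ℕ) = (i : ℕ))]
      simp [this]

/-- Soundness of the counter. -/
theorem cf_sound {p : ℕ} : ∀ (w : List (Fin p)) {i m : ℕ}, cf i w = some m →
    i ≤ m ∧ (∀ j ∈ w, (j : ℕ) < m) ∧
      (∀ c, i ≤ c → c < m → ∃ j ∈ w, (j : ℕ) = c) ∧
      (∀ j ∈ w, i ≤ (j : ℕ) → ∀ x ∈ w.take (w.idxOf j), (x : ℕ) < (j : ℕ)) := by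
  intro w
  induction w with
  | nil =>
    intro i m h
    simp only [cf, Option.some.injEq] at h
    subst h
    refine ⟨le_refl _, by simp, fun c h1 h2 => by omega, by simp⟩
  | cons j w ih =>
    intro i m h
    simp only [cf] at h
    by_cases hlt : (j : ℕ) < i
    · rw [if_pos hlt] at h
      obtain ⟨him, hall, hocc, hord⟩ := ih h
      refine ⟨him, ?_, ?_, ?_⟩
      · intro j' hj'
        rcases List.mem_cons.mp hj' with rfl | hj'
        · omega
        · exact hall j' hj'
      · intro c h1 h2
        obtain ⟨j', hj', hv⟩ := hocc c h1 h2
        exact ⟨j', List.mem_cons_of_mem _ hj', hv⟩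
      · intro j' hj' hij' x hx
        have hne : j ≠ j' := by intro e; subst e; omega
        rcases List.mem_cons.mp hj' with rfl | hj'w
        · exact absurd rfl hne
        rw [List.idxOf_cons_ne _ hne, List.take_succ_cons] at hx
        rcases List.mem_cons.mp hx with rfl | hx
        · omega
        · exact hord j' hj'w hij' x hx
    · rw [if_neg hlt] at h
      by_cases heq : (j : ℕ) = i
      · rw [if_pos heq] at h
        obtain ⟨him, hall, hocc, hord⟩ := ih h
        refine ⟨by omega, ?_, ?_, ?_⟩
        · intro j' hj'
          rcases List.mem_cons.mp hj' with rfl | hj'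
          · omega
          · exact hall j' hj'
        · intro c h1 h2
          by_cases hc : c = i
          · exact ⟨j, List.mem_cons_self, by omega⟩
          · obtain ⟨j', hj', hv⟩ := hocc c (by omega) h2
            exact ⟨j', List.mem_cons_of_mem _ hj', hv⟩
        · intro j' hj' hij' x hx
          by_cases hne : j = j'
          · subst hne
            rw [List.idxOf_cons_self, List.take_zero] at hx
            exact absurd hx List.not_mem_nil
          · rcases List.mem_cons.mp hj' with rfl | hj'w
            · exact absurd rfl hne
            rw [List.idxOf_cons_ne _ hne, List.take_succ_cons] at hx
            have hij'' : i + 1 ≤ (j' : ℕ) := by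
              rcases Nat.lt_or_ge (i) (j' : ℕ) with h' | h'
              · omega
              · exfalso; apply hne; exact Fin.val_inj.mp (by omega)
            rcases List.mem_cons.mp hx with rfl | hx
            · omega
            · exact hord j' hj'w (by omega) x hx
      · rw [if_neg heq] at h
        exact absurd h (by simp)

/-- Completeness of the counter. -/
theorem cf_complete {p : ℕ} : ∀ (w : List (Fin p)) {i : ℕ}, i ≤ p →
    (∀ j : Fin p, i ≤ (j : ℕ) → j ∈ w) →
    (∀ j : Fin p, i ≤ (j : ℕ) → ∀ x ∈ w.take (w.idxOf j), (x : ℕ) < (j : ℕ)) →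
    cf i w = some p := by
  intro w
  induction w with
  | nil =>
    intro i hip hmem _
    have : i = p := by
      by_contra hne
      have hip' : i < p := by omega
      exact absurd (hmem ⟨i, hip'⟩ (le_refl _)) List.not_mem_nil
    simp [cf, this]
  | cons j w ih =>
    intro i hip hmem hord
    rcases lt_trichotomy (j : ℕ) i with hlt | heq | hgt
    · simp only [cf, if_pos hlt]
      apply ih hip
      · intro j' hj'
        have hne : j ≠ j' := by intro e; subst e; omega
        rcases List.mem_cons.mp (hmem j' hj') with rfl | h
        · exact absurd rfl hne
        · exact h
      · intro j' hj' x hx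
        have hne : j ≠ j' := by intro e; subst e; omega
        have := hord j' hj' x
        rw [List.idxOf_cons_ne _ hne, List.take_succ_cons] at this
        exact this (List.mem_cons_of_mem _ hx)
    · simp only [cf, if_neg (by omega : ¬ (j : ℕ) < i), if_pos heq]
      have hip' : i + 1 ≤ p := by have := j.isLt; omega
      apply ih hip'
      · intro j' hj'
        have hne : j ≠ j' := by intro e; subst e; omega
        rcases List.mem_cons.mp (hmem j' (by omega)) with rfl | h
        · exact absurd rfl hne
        · exact h
      · intro j' hj' x hx
        have hne : j ≠ j' := by intro e; subst e; omega
        have := hord j' (by omega) x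
        rw [List.idxOf_cons_ne _ hne, List.take_succ_cons] at this
        exact this (List.mem_cons_of_mem _ hx)
    · exfalso
      have hipp : i < p := by have := j.isLt; omega
      set j' : Fin p := ⟨i, hipp⟩ with hj'
      have hne : j ≠ j' := by intro e; rw [e] at hgt; simp [hj'] at hgt
      have := hord j' (le_refl _)
      rw [List.idxOf_cons_ne _ hne, List.take_succ_cons] at this
      have := this j (List.mem_cons_self)
      simp [hj'] at this
      omega

theorem stmt9 {σ : Type*} {p : ℕ} (M : NFA (Fin p) σ) (w : List (Fin p)) :
    w ∈ (countNFA M).accepts ↔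
      (w ∈ M.accepts ∧ (∀ j : Fin p, j ∈ w) ∧
        ∀ j : Fin p, ∀ x ∈ w.take (w.idxOf j), x < j) := by
  have hstart : ((countNFA M).start : Set (σ × Fin (p + 1)))
      = {qi | qi.1 ∈ M.start ∧ qi.2 = (0 : Fin (p + 1))} := rfl
  have key : w ∈ (countNFA M).accepts ↔ w ∈ M.accepts ∧ cf 0 w = some p := by
    rw [NFA.mem_accepts]
    constructor
    · rintro ⟨⟨q, k⟩, ⟨hacc, hk⟩, hev⟩
      rw [hstart] at hev
      have := (eval_count M w M.start 0 q k).mp (by simpa using hev)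
      have hk' : (k : ℕ) = p := hk
      refine ⟨⟨q, hacc, this.1⟩, ?_⟩
      have h2 := this.2
      rw [hk'] at h2
      simpa using h2
    · rintro ⟨⟨q, hacc, hev⟩, hcf⟩
      refine ⟨(q, Fin.last p), ⟨hacc, by simp⟩, ?_⟩
      rw [hstart]
      exact (eval_count M w M.start 0 q (Fin.last p)).mpr (by simpa using ⟨hev, hcf⟩)
  rw [key]
  constructor
  · rintro ⟨hacc, hcf⟩
    obtain ⟨_, _, hocc, hord⟩ := cf_sound w hcf
    have hmem : ∀ j : Fin p, j ∈ w := by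
      intro j
      obtain ⟨j', hj', hv⟩ := hocc (j : ℕ) (Nat.zero_le _) j.isLt
      rwa [Fin.val_inj.mp hv] at hj'
    refine ⟨hacc, hmem, fun j x hx => ?_⟩
    exact Fin.lt_def.mpr (hord j (hmem j) (Nat.zero_le _) x hx)
  · rintro ⟨hacc, hmem, hord⟩
    exact ⟨hacc, cf_complete w (Nat.zero_le _) (fun j _ => hmem j)
      (fun j _ x hx => Fin.lt_def.mp (hord j x hx))⟩
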